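/- In the infinite word u^{(h)} = lim_{i→∞} σ_h σ_{h+1} ⋯ σ_{h+i-1}(0), every occurrence of the factor 01 is preceded by 1 0^{m_h - 1}; consequently, every bispecial factor of u^{(h)} containing 01 also contains 10. -/

import Mathlib

/-- The `k`-th power of a finite word `w` (concatenation of `k` copies). -/
def wpow (w : List Bool) (k : ℕ) : List Bool := (List.replicate k w).flatten

/-- The pair of words `(u_i, v_i)`:  `u_0 = 0`, `v_0 = 1`,
`u_{i+1} = u_i^{m_i} v_i^{l_i}`, `v_{i+1} = u_i^{m_i} v_i^{n_i}`. -/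
def uvSeq (l m n : ℕ → ℕ) : ℕ → List Bool × List Bool
  | 0 => ([false], [true])
  | i + 1 =>
      (wpow (uvSeq l m n i).1 (m i) ++ wpow (uvSeq l m n i).2 (l i),
       wpow (uvSeq l m n i).1 (m i) ++ wpow (uvSeq l m n i).2 (n i))

/-- The substitution `σ_h` : `0 ↦ 0^{m_h} 1^{l_h}`, `1 ↦ 0^{m_h} 1^{n_h}`. -/
def subw (l m n : ℕ → ℕ) (h : ℕ) (w : List Bool) : List Bool :=
  w.flatMap fun c => List.replicate (m h) false ++ List.replicate (if c then n h else l h) true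

/-- `wordIter i h = σ_h σ_{h+1} ⋯ σ_{h+i-1}(0)`. -/
def wordIter (l m n : ℕ → ℕ) : ℕ → ℕ → List Bool
  | 0, _ => [false]
  | i + 1, h => subw l m n h (wordIter l m n i (h + 1))

/-- The infinite word `u^{(h)} = lim_i σ_h ⋯ σ_{h+i-1}(0)`. -/
def limWord (l m n : ℕ → ℕ) (h : ℕ) (k : ℕ) : Bool :=
  (wordIter l m n (k + 1) h).getD k false

/-- `w` is a factor of the infinite word `U`. -/
def IsFactor (U : ℕ → Bool) (w : List Bool) : Prop :=
  ∃ k, w = (List.range w.length).map fun j => U (k + j)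

/-- `σ_0 σ_1 ⋯ σ_{h+i-1}` starting at `h`, applied to `w`. -/
def subComp (l m n : ℕ → ℕ) : ℕ → ℕ → List Bool → List Bool
  | 0, _, w => w
  | i + 1, h, w => subw l m n h (subComp l m n i (h + 1) w)

/-- `\hat{σ}_h(w) = 1^{l_h} σ_h(w) 0^{m_h} 1^{l_h}`. -/
def hatw (l m n : ℕ → ℕ) (h : ℕ) (w : List Bool) : List Bool :=
  List.replicate (l h) true ++ subw l m n h w ++
    List.replicate (m h) false ++ List.replicate (l h) true

/-- `hatComp i h w = \hat{σ}_h ⋯ \hat{σ}_{h+i-1}(w)`. -/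
def hatComp (l m n : ℕ → ℕ) : ℕ → ℕ → List Bool → List Bool
  | 0, _, w => w
  | i + 1, h, w => hatw l m n h (hatComp l m n i (h + 1) w)

/-- The complexity function of the infinite word `U`. -/
noncomputable def complexityFn (U : ℕ → Bool) (nn : ℕ) : ℕ :=
  Set.ncard {w : List Bool | w.length = nn ∧ IsFactor U w}

/-- `v` is a bispecial factor of the infinite word `U`. -/
def Bispecial (U : ℕ → Bool) (v : List Bool) : Prop :=
  IsFactor U (false :: v) ∧ IsFactor U (true :: v) ∧
    IsFactor U (v ++ [false]) ∧ IsFactor U (v ++ [true])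



section Aux

lemma getD_replicate' {a d : Bool} {k i : ℕ} (h : i < k) :
    (List.replicate k a).getD i d = a := by
  rw [List.getD_eq_getElem _ _ (by simpa using h), List.getElem_replicate]

lemma getD_app (u w : List Bool) (i : ℕ) :
    (u ++ w).getD i false =
      if i < u.length then u.getD i false else w.getD (i - u.length) false := by
  split_ifs with h1
  · exact List.getD_append _ _ _ _ h1
  · exact List.getD_append_right _ _ _ _ (by omega)

inductive Blocks (m0 : ℕ) : List Bool → Prop
  | nil : Blocks m0 []
  | cons (t : ℕ) (ht : 1 ≤ t) (w : List Bool) (hw : Blocks m0 w) :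
      Blocks m0 (List.replicate m0 false ++ (List.replicate t true ++ w))

lemma getD_blockw (m0 t : ℕ) (w : List Bool) (i : ℕ) :
    (List.replicate m0 false ++ (List.replicate t true ++ w)).getD i false =
      if i < m0 then false else if i < m0 + t then true else w.getD (i - (m0 + t)) false := by
  rw [getD_app]
  simp only [List.length_replicate]
  split_ifs with h1 h2
  · exact getD_replicate' h1
  · rw [getD_app]; simp only [List.length_replicate]
    rw [if_pos (by omega)]; exact getD_replicate' (by omega)
  · rw [getD_app]; simp only [List.length_replicate]
    rw [if_neg (by omega)]
    congr 1; omega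

lemma blocksA {m0 : ℕ} {W : List Bool} (hW : Blocks m0 W) :
    ∀ p : ℕ, W.getD p false = false → p < W.length → W.getD (p + 1) false = true →
      ∃ s, p + 1 = s + m0 ∧ (∀ j < m0, W.getD (s + j) false = false) ∧
        (s = 0 ∨ W.getD (s - 1) false = true) := by
  induction hW with
  | nil => intro p _ hp _; simp at hp
  | cons t ht w hw ih =>
    intro p h0 hp h1
    have hlen : (List.replicate m0 false ++ (List.replicate t true ++ w)).length
        = m0 + t + w.length := by simp; omega
    rw [getD_blockw] at h0 h1
    by_cases hc : m0 + t ≤ p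
    · rw [if_neg (by omega), if_neg (by omega)] at h0
      rw [if_neg (by omega), if_neg (by omega)] at h1
      rw [show p + 1 - (m0 + t) = (p - (m0 + t)) + 1 from by omega] at h1
      obtain ⟨s, hs1, hs2, hs3⟩ := ih (p - (m0 + t)) h0 (by omega) h1
      refine ⟨s + (m0 + t), by omega, ?_, ?_⟩
      · intro j hj
        rw [getD_blockw, if_neg (by omega), if_neg (by omega),
          show s + (m0 + t) + j - (m0 + t) = s + j from by omega]
        exact hs2 j hj
      · rcases Nat.eq_zero_or_pos s with hs0 | hs0
        · right; subst hs0
          rw [getD_blockw, if_neg (by omega), if_pos (by omega)]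
        · right
          have hh : w.getD (s - 1) false = true := hs3.resolve_left (by omega)
          rw [getD_blockw, if_neg (by omega), if_neg (by omega),
            show s + (m0 + t) - 1 - (m0 + t) = s - 1 from by omega]
          exact hh
    · have hpm : p < m0 := by
        by_contra hx
        rw [if_neg (by omega), if_pos (by omega)] at h0
        simp at h0
      have hpm1 : ¬ p + 1 < m0 := by
        intro hx
        rw [if_pos hx] at h1
        simp at h1
      have hpe : p + 1 = m0 := by omega
      refine ⟨0, by omega, ?_, Or.inl rfl⟩
      intro j hj
      rw [getD_blockw, if_pos (by omega)]

lemma blocksB {m0 : ℕ} {W : List Bool} (hW : Blocks m0 W) :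
    ∀ p : ℕ, p + m0 < W.length → (∀ j ≤ m0, W.getD (p + j) false = false) → False := by
  induction hW with
  | nil => intro p hp _; simp at hp
  | cons t ht w hw ih =>
    intro p hp hall
    have hlen : (List.replicate m0 false ++ (List.replicate t true ++ w)).length
        = m0 + t + w.length := by simp; omega
    rw [hlen] at hp
    by_cases hc : m0 + t ≤ p
    · apply ih (p - (m0 + t)) (by omega)
      intro j hj
      have := hall j hj
      rw [getD_blockw, if_neg (by omega), if_neg (by omega),
        show p + j - (m0 + t) = p - (m0 + t) + j from by omega] at this
      exact this
    · by_cases hpm : p < m0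
      · have := hall (m0 - p) (by omega)
        rw [getD_blockw, if_neg (by omega), if_pos (by omega)] at this
        simp at this
      · have := hall 0 (by omega)
        rw [getD_blockw, if_neg (by omega), if_pos (by omega)] at this
        simp at this

end Aux

section Aux2

variable (l m n : ℕ → ℕ)

lemma subw_append (h0 : ℕ) (u v : List Bool) :
    subw l m n h0 (u ++ v) = subw l m n h0 u ++ subw l m n h0 v :=
  List.flatMap_append

lemma blocks_subw (hlpos : ∀ i, 0 < l i) (hlm : ∀ i, l i < m i) (hmn : ∀ i, m i < n i)
    (h0 : ℕ) (w : List Bool) : Blocks (m h0) (subw l m n h0 w) := by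
  induction w with
  | nil => exact Blocks.nil
  | cons c w ih =>
    have : subw l m n h0 (c :: w) = List.replicate (m h0) false ++
        (List.replicate (if c then n h0 else l h0) true ++ subw l m n h0 w) := by
      simp only [subw, List.flatMap_cons, List.append_assoc]
    rw [this]
    refine Blocks.cons _ ?_ _ ih
    have := hlpos h0; have := hlm h0; have := hmn h0
    cases c <;> simp <;> omega

lemma subw_len (hlpos : ∀ i, 0 < l i) (hlm : ∀ i, l i < m i) (hmn : ∀ i, m i < n i)
    (h0 : ℕ) (w : List Bool) : 2 * w.length ≤ (subw l m n h0 w).length := by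
  induction w with
  | nil => simp [subw]
  | cons c w ih =>
    have h1 := hlpos h0; have h2 := hlm h0; have h3 := hmn h0
    have h4 : 1 ≤ (if c then n h0 else l h0) := by cases c <;> simp <;> omega
    simp only [subw, List.flatMap_cons, List.length_append, List.length_replicate,
      List.length_cons] at *
    omega

lemma wordIter_len (hlpos : ∀ i, 0 < l i) (hlm : ∀ i, l i < m i) (hmn : ∀ i, m i < n i) :
    ∀ (i h0 : ℕ), i + 1 ≤ (wordIter l m n i h0).length := by
  intro i
  induction i with
  | zero => intro h0; simp [wordIter]
  | succ i ih =>
    intro h0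
    have h1 := ih (h0 + 1)
    have h2 := subw_len l m n hlpos hlm hmn h0 (wordIter l m n i (h0 + 1))
    show i + 1 + 1 ≤ (subw l m n h0 (wordIter l m n i (h0 + 1))).length
    omega

lemma subw_prefix (h0 : ℕ) {u v : List Bool} (huv : u <+: v) :
    subw l m n h0 u <+: subw l m n h0 v := by
  obtain ⟨t, rfl⟩ := huv
  exact ⟨subw l m n h0 t, (subw_append l m n h0 u t).symm⟩

lemma wordIter_prefix_succ (hlpos : ∀ i, 0 < l i) (hlm : ∀ i, l i < m i) :
    ∀ (i h0 : ℕ), wordIter l m n i h0 <+: wordIter l m n (i + 1) h0 := by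
  intro i
  induction i with
  | zero =>
    intro h0
    obtain ⟨m', hm'⟩ : ∃ m', m h0 = m' + 1 := ⟨m h0 - 1, by have := hlpos h0; have := hlm h0; omega⟩
    refine ⟨List.replicate m' false ++ List.replicate (l h0) true, ?_⟩
    show [false] ++ _ = subw l m n h0 [false]
    simp [subw, hm', List.replicate_succ]
  | succ i ih =>
    intro h0
    show subw l m n h0 (wordIter l m n i (h0 + 1)) <+:
      subw l m n h0 (wordIter l m n (i + 1) (h0 + 1))
    exact subw_prefix l m n h0 (ih (h0 + 1))

lemma wordIter_prefix_le (hlpos : ∀ i, 0 < l i) (hlm : ∀ i, l i < m i)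
    {i j : ℕ} (hij : i ≤ j) (h0 : ℕ) : wordIter l m n i h0 <+: wordIter l m n j h0 := by
  induction j, hij using Nat.le_induction with
  | base => exact List.prefix_refl _
  | succ j hij ih => exact ih.trans (wordIter_prefix_succ l m n hlpos hlm j h0)

lemma limWord_eq (hlpos : ∀ i, 0 < l i) (hlm : ∀ i, l i < m i) (hmn : ∀ i, m i < n i)
    (h0 j i : ℕ) (hji : j < i) :
    limWord l m n h0 j = (wordIter l m n i h0).getD j false := by
  obtain ⟨t, ht⟩ := wordIter_prefix_le l m n hlpos hlm (show j + 1 ≤ i from hji) h0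
  have hlen := wordIter_len l m n hlpos hlm hmn (j + 1) h0
  unfold limWord
  rw [← ht, List.getD_append _ _ _ _ (by omega)]

lemma limA (hlpos : ∀ i, 0 < l i) (hlm : ∀ i, l i < m i) (hmn : ∀ i, m i < n i)
    (h0 p : ℕ) (hp0 : limWord l m n h0 p = false) (hp1 : limWord l m n h0 (p + 1) = true) :
    ∃ s, p + 1 = s + m h0 ∧ (∀ j < m h0, limWord l m n h0 (s + j) = false) ∧
      (s = 0 ∨ limWord l m n h0 (s - 1) = true) := by
  set W := wordIter l m n (p + 3) h0 with hWdef
  have hB : Blocks (m h0) W := by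
    have : W = subw l m n h0 (wordIter l m n (p + 2) (h0 + 1)) := rfl
    rw [this]
    exact blocks_subw l m n hlpos hlm hmn h0 _
  have hlen : p + 3 + 1 ≤ W.length := wordIter_len l m n hlpos hlm hmn (p + 3) h0
  have key : ∀ j, j ≤ p + 2 → limWord l m n h0 j = W.getD j false := fun j hj =>
    limWord_eq l m n hlpos hlm hmn h0 j (p + 3) (by omega)
  rw [key p (by omega)] at hp0
  rw [key (p + 1) (by omega)] at hp1
  obtain ⟨s, hs1, hs2, hs3⟩ := blocksA hB p hp0 (by omega) hp1
  have hm2 : 1 ≤ m h0 := by have := hlpos h0; have := hlm h0; omega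
  refine ⟨s, hs1, fun j hj => ?_, ?_⟩
  · rw [key (s + j) (by omega)]
    exact hs2 j hj
  · rcases hs3 with h | h
    · exact Or.inl h
    · right; rw [key (s - 1) (by omega)]; exact h

lemma limB (hlpos : ∀ i, 0 < l i) (hlm : ∀ i, l i < m i) (hmn : ∀ i, m i < n i)
    (h0 p : ℕ) (hall : ∀ j ≤ m h0, limWord l m n h0 (p + j) = false) : False := by
  set W := wordIter l m n (p + m h0 + 2) h0 with hWdef
  have hB : Blocks (m h0) W := by
    have : W = subw l m n h0 (wordIter l m n (p + m h0 + 1) (h0 + 1)) := rfl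
    rw [this]
    exact blocks_subw l m n hlpos hlm hmn h0 _
  have hlen : p + m h0 + 2 + 1 ≤ W.length := wordIter_len l m n hlpos hlm hmn _ h0
  have key : ∀ j, j ≤ p + m h0 + 1 → limWord l m n h0 j = W.getD j false := fun j hj =>
    limWord_eq l m n hlpos hlm hmn h0 j (p + m h0 + 2) (by omega)
  refine blocksB hB p (by omega) (fun j hj => ?_)
  rw [← key (p + j) (by omega)]
  exact hall j hj

end Aux2

section Aux3

lemma isFactor_getD {U : ℕ → Bool} {x : List Bool} (hx : IsFactor U x) :
    ∃ k, ∀ i, i < x.length → x.getD i false = U (k + i) := by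
  obtain ⟨k, hk⟩ := hx
  refine ⟨k, fun i hi => ?_⟩
  have := congrArg (fun (L : List Bool) => L.getD i false) hk
  rw [this, List.getD_eq_getElem _ _ (by simpa using hi)]
  simp

lemma eq_zeros_ones {v : List Bool} (hv : ¬ [true, false] <:+: v) :
    ∃ a b, v = List.replicate a false ++ List.replicate b true := by
  induction v with
  | nil => exact ⟨0, 0, rfl⟩
  | cons c v ih =>
    obtain ⟨a, b, rfl⟩ := ih (fun hin => hv (List.infix_cons hin))
    cases c with
    | false => exact ⟨a + 1, b, by simp [List.replicate_succ]⟩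
    | true =>
      cases a with
      | zero => exact ⟨0, b + 1, by simp [List.replicate_succ]⟩
      | succ a =>
        exact absurd ⟨[], List.replicate a false ++ List.replicate b true,
          by simp [List.replicate_succ]⟩ hv

end Aux3


theorem stmt14 (l m n : ℕ → ℕ) (hlpos : ∀ i, 0 < l i)
    (hlm : ∀ i, l i < m i) (hmn : ∀ i, m i < n i) (h : ℕ) :
    (∀ w : List Bool, IsFactor (limWord l m n h) (w ++ [false, true]) →
        m h ≤ w.length → (true :: List.replicate (m h - 1) false) <:+ w) ∧
      (∀ v : List Bool, Bispecial (limWord l m n h) v →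
        [false, true] <:+: v → [true, false] <:+: v) := by
  have hm1 : 1 ≤ m h := by have := hlpos h; have := hlm h; omega
  constructor
  · -- Part 1
    intro w hw hmw
    obtain ⟨k, hk⟩ := isFactor_getD hw
    set L := w.length with hL
    have hlen : (w ++ [false, true]).length = L + 2 := by simp; omega
    have e1 : limWord l m n h (k + L) = false := by
      have := hk L (by omega)
      rw [getD_app, if_neg (by omega)] at this
      simp only [← hL, Nat.sub_self] at this
      exact this.symm
    have e2 : limWord l m n h (k + L + 1) = true := by
      have := hk (L + 1) (by omega)
      rw [getD_app, if_neg (by omega)] at this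
      rw [show L + 1 - w.length = 1 from by omega] at this
      rw [show k + L + 1 = k + (L + 1) from by omega]
      exact this.symm
    obtain ⟨s, hs1, hs2, hs3⟩ := limA l m n hlpos hlm hmn h (k + L) e1 e2
    have hU1 : limWord l m n h (s - 1) = true := hs3.resolve_left (by omega)
    have hw_i : ∀ j, j < L → w.getD j false = limWord l m n h (k + j) := by
      intro j hj
      have := hk j (by omega)
      rw [getD_app, if_pos (by omega)] at this
      exact this
    have hdrop : w.drop (L - m h) = true :: List.replicate (m h - 1) false := by
      apply List.ext_getElem
      · simp only [List.length_drop, List.length_cons, List.length_replicate, ← hL]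
        omega
      · intro i h1 h2
        simp only [List.length_drop, ← hL] at h1
        simp only [List.length_cons, List.length_replicate] at h2
        rw [List.getElem_drop]
        rw [← List.getD_eq_getElem _ false (by omega)]
        rw [hw_i (L - m h + i) (by omega)]
        cases i with
        | zero =>
          rw [show k + (L - m h + 0) = s - 1 from by omega, hU1]
          rfl
        | succ i' =>
          rw [show k + (L - m h + (i' + 1)) = s + i' from by omega,
            hs2 i' (by omega), List.getElem_cons_succ, List.getElem_replicate]
    exact hdrop ▸ List.drop_suffix _ _
  · -- Part 2
    intro v hbis hinf
    by_contra h10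
    obtain ⟨a, b, rfl⟩ := eq_zeros_ones h10
    have hf : false ∈ List.replicate a false ++ List.replicate b true :=
      hinf.subset (by simp)
    have ht : true ∈ List.replicate a false ++ List.replicate b true :=
      hinf.subset (by simp)
    have ha : 0 < a := by
      rcases Nat.eq_zero_or_pos a with h' | h'
      · subst h'; simp [List.mem_replicate] at hf
      · exact h'
    have hb : 0 < b := by
      rcases Nat.eq_zero_or_pos b with h' | h'
      · subst h'; simp [List.mem_replicate] at ht
      · exact h'
    set v := List.replicate a false ++ List.replicate b true with hvdef
    have hvlen : v.length = a + b := by simp [hvdef]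
    -- use true :: v
    obtain ⟨k, hk⟩ := isFactor_getD hbis.2.1
    have hUk : limWord l m n h k = true := by
      have := hk 0 (by simp)
      simpa using this.symm
    have hUz : ∀ j, j < a → limWord l m n h (k + 1 + j) = false := by
      intro j hj
      have := hk (j + 1) (by simp [hvlen]; omega)
      rw [List.getD_cons_succ, getD_app, if_pos (by simp only [List.length_replicate]; omega),
        getD_replicate' hj] at this
      rw [show k + 1 + j = k + (j + 1) from by omega]
      exact this.symm
    have hUo : limWord l m n h (k + a + 1) = true := by
      have := hk (a + 1) (by simp [hvlen]; omega)
      rw [List.getD_cons_succ, getD_app, if_neg (by simp)] at this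
      rw [List.length_replicate, Nat.sub_self, getD_replicate' hb] at this
      rw [show k + a + 1 = k + (a + 1) from by omega]
      exact this.symm
    have hUa : limWord l m n h (k + a) = false := by
      have := hUz (a - 1) (by omega)
      rw [show k + 1 + (a - 1) = k + a from by omega] at this
      exact this
    obtain ⟨s, hs1, hs2, _⟩ := limA l m n hlpos hlm hmn h (k + a) hUa hUo
    have hma : m h ≤ a := by
      by_contra hma
      have hks : s ≤ k := by omega
      have := hs2 (k - s) (by omega)
      rw [show s + (k - s) = k from by omega, hUk] at this
      simp at this
    -- use false :: v
    obtain ⟨k', hk'⟩ := isFactor_getD hbis.1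
    refine limB l m n hlpos hlm hmn h k' (fun j hj => ?_)
    have := hk' j (by simp [hvlen]; omega)
    rw [show k' + j = k' + j from rfl]
    cases j with
    | zero => simpa using this.symm
    | succ j' =>
      rw [List.getD_cons_succ, getD_app, if_pos (by simp only [List.length_replicate]; omega),
        getD_replicate' (by omega)] at this
      exact this.symm
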